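/- Let K be a field of characteristic zero and let P : K^n → K be a bisymmetric polynomial function of degree p ≥ 2 whose homogeneous component of degree p is the monomial P_p(x) = c·x^γ with c ≠ 0 and |γ| = p. Suppose P ≠ P_p, let q < p be the degree of P − P_p and let P_q be the homogeneous component of degree q of P. If there exists an index j ∈ {1,…,n} with 0 < γ_j < p − q, then P_q = 0. -/

import Mathlib

/-- A function `f : S^n → S` is bisymmetric if for every `n × n` matrix `X` over `S`,
applying `f` to the rows and then to the results equals applying `f` to the columns
and then to the results. -/
def Bisym {S : Type*} {n : ℕ} (f : (Fin n → S) → S) : Prop :=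
  ∀ X : Fin n → Fin n → S,
    f (fun i => f (X i)) = f (fun j => f (fun i => X i j))


open MvPolynomial

namespace BisymAux

variable {K : Type*} [CommSemiring K] {n : ℕ}

/-- Row extraction of an exponent over a square of variables. -/
noncomputable def row (i : Fin n) (E : Fin n × Fin n →₀ ℕ) : Fin n →₀ ℕ :=
  Finsupp.equivFunOnFinite.symm (fun k => E (i, k))

@[simp] lemma row_apply (i : Fin n) (E : Fin n × Fin n →₀ ℕ) (k : Fin n) :
    row i E k = E (i, k) := rfl

lemma degree_eq_sum {m : ℕ} (d : Fin m →₀ ℕ) : d.degree = ∑ i, d i := by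
  rw [Finsupp.degree]
  exact Finset.sum_subset (Finset.subset_univ _) (by
    intro x _ hx
    simpa using Finsupp.notMem_support_iff.mp hx)

lemma coeff_prod_rename_aux (A : Fin n → MvPolynomial (Fin n) K)
    (s : Finset (Fin n)) (E : Fin n × Fin n →₀ ℕ) :
    coeff E (∏ i ∈ s, rename (Prod.mk i) (A i)) =
      if ∀ x ∈ E.support, x.1 ∈ s then ∏ i ∈ s, coeff (row i E) (A i) else 0 := by
  classical
  induction s using Finset.induction generalizing E with
  | empty =>
    simp only [Finset.prod_empty]
    rw [MvPolynomial.coeff_one]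
    by_cases hE : E = 0
    · subst hE; simp
    · rw [if_neg (by simpa [eq_comm] using hE), if_neg]
      intro h
      apply hE
      ext x
      by_cases hx : x ∈ E.support
      · exact absurd (h x hx) (by simp)
      · simpa using Finsupp.notMem_support_iff.mp hx
  | @insert a s ha ih =>
    rw [Finset.prod_insert ha, MvPolynomial.coeff_mul]
    have hinj : Function.Injective (Prod.mk a : Fin n → Fin n × Fin n) := by
      intro x y h
      simpa using h
    -- key fact: if coeff u (rename (Prod.mk a) (A a)) ≠ 0 then u.support has fst = a
    have hsupp : ∀ u : Fin n × Fin n →₀ ℕ, coeff u (rename (Prod.mk a) (A a)) ≠ 0 →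
        ∀ x ∈ u.support, x.1 = a := by
      intro u hu x hx
      obtain ⟨d, hd, -⟩ := coeff_rename_ne_zero _ _ _ hu
      subst hd
      rw [Finsupp.mapDomain_support_of_injective hinj d] at hx
      simp only [Finset.mem_image] at hx
      obtain ⟨y, -, rfl⟩ := hx
      rfl
    by_cases hcond : ∀ x ∈ E.support, x.1 ∈ insert a s
    · rw [if_pos hcond]
      set Ea : Fin n × Fin n →₀ ℕ := E.filter (fun x => x.1 = a) with hEa
      set Es : Fin n × Fin n →₀ ℕ := E.filter (fun x => ¬ x.1 = a) with hEs
      have hsplit : Ea + Es = E := Finsupp.filter_pos_add_filter_neg E _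
      rw [Finset.sum_eq_single (Ea, Es)]
      · -- evaluate the surviving term
        have h1 : Ea = Finsupp.mapDomain (Prod.mk a) (row a E) := by
          ext x
          by_cases hxa : x.1 = a
          · obtain ⟨x1, x2⟩ := x
            simp only at hxa
            rw [hxa, Finsupp.mapDomain_apply hinj, hEa,
              Finsupp.filter_apply_pos (fun y => y.1 = a) E (by simp)]
            rfl
          · rw [Finsupp.mapDomain_notin_range, hEa,
              Finsupp.filter_apply_neg (fun y => y.1 = a) E hxa]
            rintro ⟨y, rfl⟩
            exact hxa rfl
        have h2 : coeff Ea (rename (Prod.mk a) (A a)) = coeff (row a E) (A a) := by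
          rw [h1, coeff_rename_mapDomain _ hinj]
        rw [ih, if_pos, h2, Finset.prod_insert ha]
        · congr 1
          apply Finset.prod_congr rfl
          intro i hi
          congr 1
          ext k
          simp only [row_apply, hEs]
          rw [Finsupp.filter_apply_pos (fun y => ¬ y.1 = a) E (by
            simp only
            rintro rfl
            exact ha hi)]
        · intro x hx
          have hx' : ¬ E x = 0 ∧ ¬ x.1 = a := by
            simpa [hEs, Finsupp.mem_support_iff] using hx
          rcases Finset.mem_insert.mp (hcond x (Finsupp.mem_support_iff.mpr hx'.1)) with h | h
          · exact absurd h hx'.2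
          · exact h
      · -- other terms vanish
        rintro ⟨u, v⟩ hmem hne
        rw [Finset.HasAntidiagonal.mem_antidiagonal] at hmem
        by_cases hu : coeff u (rename (Prod.mk a) (A a)) = 0
        · rw [hu, zero_mul]
        rw [ih]
        by_cases hv : ∀ x ∈ v.support, x.1 ∈ s
        · exfalso
          apply hne
          have hu' := hsupp u hu
          have huv : u = Ea ∧ v = Es := by
            constructor
            · ext x
              by_cases hxa : x.1 = a
              · have hvx : v x = 0 := by
                  by_contra hvx
                  exact ha (hxa ▸ hv x (Finsupp.mem_support_iff.mpr hvx))
                have := DFunLike.congr_fun hmem x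
                simp only [Finsupp.add_apply] at this
                rw [hEa, Finsupp.filter_apply_pos (fun y => y.1 = a) E hxa]
                omega
              · have hux : u x = 0 := by
                  by_contra hux
                  exact hxa (hu' x (Finsupp.mem_support_iff.mpr hux))
                rw [hEa, Finsupp.filter_apply_neg (fun y => y.1 = a) E hxa, hux]
            · ext x
              by_cases hxa : x.1 = a
              · have hvx : v x = 0 := by
                  by_contra hvx
                  exact ha (hxa ▸ hv x (Finsupp.mem_support_iff.mpr hvx))
                rw [hEs, Finsupp.filter_apply_neg (fun y => ¬ y.1 = a) E (by simpa using hxa), hvx]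
              · have hux : u x = 0 := by
                  by_contra hux
                  exact hxa (hu' x (Finsupp.mem_support_iff.mpr hux))
                have := DFunLike.congr_fun hmem x
                simp only [Finsupp.add_apply] at this
                rw [hEs, Finsupp.filter_apply_pos (fun y => ¬ y.1 = a) E hxa]
                omega
          rw [huv.1, huv.2]
        · rw [if_neg hv, mul_zero]
      · intro hmem
        exact absurd (Finset.HasAntidiagonal.mem_antidiagonal.mpr hsplit) hmem
    · rw [if_neg hcond]
      push_neg at hcond
      obtain ⟨x0, hx0, hx0a⟩ := hcond
      apply Finset.sum_eq_zero
      rintro ⟨u, v⟩ hmem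
      rw [Finset.HasAntidiagonal.mem_antidiagonal] at hmem
      by_cases hu : coeff u (rename (Prod.mk a) (A a)) = 0
      · rw [hu, zero_mul]
      have hux : u x0 = 0 := by
        by_contra hux
        have h1 : x0.1 = a := hsupp u hu x0 (Finsupp.mem_support_iff.mpr hux)
        exact hx0a (h1 ▸ Finset.mem_insert_self a s)
      have hvx : v x0 ≠ 0 := by
        have := DFunLike.congr_fun hmem x0
        simp only [Finsupp.add_apply] at this
        have hE0 := Finsupp.mem_support_iff.mp hx0
        omega
      rw [ih, if_neg, mul_zero]
      intro h
      exact hx0a (Finset.mem_insert_of_mem (h x0 (Finsupp.mem_support_iff.mpr hvx)))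

lemma coeff_prod_rename (A : Fin n → MvPolynomial (Fin n) K) (E : Fin n × Fin n →₀ ℕ) :
    coeff E (∏ i, rename (Prod.mk i) (A i)) = ∏ i, coeff (row i E) (A i) := by
  rw [coeff_prod_rename_aux, if_pos (fun x _ => Finset.mem_univ _)]


lemma degree_eq_sum' {σ : Type*} [Fintype σ] (d : σ →₀ ℕ) : d.degree = ∑ i, d i := by
  rw [Finsupp.degree]
  exact Finset.sum_subset (Finset.subset_univ _) (by
    intro x _ hx
    simpa using Finsupp.notMem_support_iff.mp hx)

lemma degree_le_of_le {σ : Type*} [Fintype σ] {b e : σ →₀ ℕ} (h : b ≤ e) :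
    b.degree ≤ e.degree := by
  rw [degree_eq_sum', degree_eq_sum']
  exact Finset.sum_le_sum fun i _ => h i

lemma degree_tsub {σ : Type*} [Fintype σ] {b e : σ →₀ ℕ} (h : b ≤ e) :
    (e - b).degree = e.degree - b.degree := by
  rw [degree_eq_sum', degree_eq_sum', degree_eq_sum']
  simp only [Finsupp.tsub_apply]
  exact Finset.sum_tsub_distrib _ fun i _ => h i

lemma degree_smul' {σ : Type*} [Fintype σ] (k : ℕ) (γ : σ →₀ ℕ) :
    (k • γ).degree = k * γ.degree := by
  rw [degree_eq_sum', degree_eq_sum', Finset.mul_sum]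
  simp [Finsupp.smul_apply, mul_comm]

variable {K : Type*} [CommRing K] {n : ℕ}

lemma coeff_pow_expand {P T : MvPolynomial (Fin n) K} {c : K} {γ : Fin n →₀ ℕ}
    (hP : P = monomial γ c + T) (m : ℕ) (e : Fin n →₀ ℕ) :
    coeff e (P ^ m) = ∑ k ∈ Finset.range (m + 1),
      (m.choose k : K) * (if k • γ ≤ e then c ^ k * coeff (e - k • γ) (T ^ (m - k)) else 0) := by
  rw [hP, add_pow, coeff_sum]
  apply Finset.sum_congr rfl
  intro k hk
  rw [monomial_pow, mul_assoc, coeff_monomial_mul']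
  have hcast : ((m.choose k : ℕ) : MvPolynomial (Fin n) K) = C ((m.choose k : ℕ) : K) := by
    simp
  rw [hcast]
  split_ifs with h
  · rw [mul_comm (T ^ (m - k)) _, coeff_C_mul]
    ring
  · rw [mul_zero]

variable {P T : MvPolynomial (Fin n) K} {c : K} {γ : Fin n →₀ ℕ} {p q : ℕ}

lemma coeff_T_pow_zero (hT : T.totalDegree ≤ q) {t : ℕ} {d : Fin n →₀ ℕ}
    (hd : t * q < d.degree) : coeff d (T ^ t) = 0 := by
  apply coeff_eq_zero_of_totalDegree_lt
  calc (T ^ t).totalDegree ≤ t * T.totalDegree := totalDegree_pow T t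
    _ ≤ t * q := Nat.mul_le_mul_left t hT
    _ < d.degree := hd

lemma coeff_pow_zero_high (hP : P = monomial γ c + T) (hγd : γ.degree = p)
    (hT : T.totalDegree ≤ q) (hqp : q < p) {m : ℕ} {e : Fin n →₀ ℕ}
    (he : m * p < e.degree) : coeff e (P ^ m) = 0 := by
  rw [coeff_pow_expand hP]
  apply Finset.sum_eq_zero
  intro k hk
  rw [Finset.mem_range] at hk
  split_ifs with h
  · rw [coeff_T_pow_zero hT, mul_zero, mul_zero]
    have h1 : k * p ≤ e.degree := by
      have := degree_le_of_le h
      rwa [degree_smul', hγd] at this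
    rw [degree_tsub h, degree_smul', hγd]
    have e1 : (m - k) * p + k * p = m * p := by
      rw [← Nat.add_mul]
      congr 1
      omega
    have e2 : (m - k) * q ≤ (m - k) * p := Nat.mul_le_mul_left _ (le_of_lt hqp)
    omega
  · rw [mul_zero]

lemma coeff_pow_zero_gap (hP : P = monomial γ c + T) (hγd : γ.degree = p)
    (hT : T.totalDegree ≤ q) (hqp : q < p) {m : ℕ} {e : Fin n →₀ ℕ}
    (hlo : (m - 1) * p + q < e.degree) (hhi : e.degree < m * p) : coeff e (P ^ m) = 0 := by
  have hm : 1 ≤ m := by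
    rcases Nat.eq_zero_or_pos m with rfl | h0
    · omega
    · exact h0
  rw [coeff_pow_expand hP]
  apply Finset.sum_eq_zero
  intro k hk
  rw [Finset.mem_range] at hk
  split_ifs with h
  · rw [coeff_T_pow_zero hT, mul_zero, mul_zero]
    have h1 : k * p ≤ e.degree := by
      have := degree_le_of_le h
      rwa [degree_smul', hγd] at this
    rw [degree_tsub h, degree_smul', hγd]
    -- need (m-k)*q < e.degree - k*p
    have hkm : k ≤ m := by omega
    rcases Nat.lt_or_ge k m with hkm' | hkm'
    · -- k ≤ m - 1 : (m-1)*p + q < deg e, k*p ≤ (m-1)*p so ...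
      have e1 : (m - k) * q = (m - 1 - k) * q + q := by
        conv_lhs => rw [show m - k = (m - 1 - k) + 1 by omega]
        ring
      have e2 : (m - 1 - k) * q ≤ (m - 1 - k) * p := Nat.mul_le_mul_left _ (le_of_lt hqp)
      have e3 : (m - 1 - k) * p + k * p = (m - 1) * p := by
        rw [← Nat.add_mul]
        congr 1
        omega
      omega
    · -- k = m
      have : k = m := by omega
      rw [this] at h1
      omega
  · rw [mul_zero]

lemma coeff_pow_top (hP : P = monomial γ c + T) (hγd : γ.degree = p)
    (hT : T.totalDegree ≤ q) (hqp : q < p) {m : ℕ} {e : Fin n →₀ ℕ}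
    (he : e.degree = m * p) :
    coeff e (P ^ m) = if e = m • γ then c ^ m else 0 := by
  rw [coeff_pow_expand hP]
  rw [Finset.sum_eq_single m]
  · rw [Nat.choose_self, Nat.cast_one, one_mul, Nat.sub_self, pow_zero]
    by_cases h : e = m • γ
    · subst h
      rw [if_pos le_rfl, tsub_self, coeff_one, if_pos rfl, mul_one, if_pos rfl]
    · split_ifs with h2
      · have : e - m • γ ≠ 0 := by
          intro h3
          exact h (le_antisymm (tsub_eq_zero_iff_le.mp h3) h2)
        rw [coeff_one, if_neg (by exact fun hh => this hh.symm), mul_zero]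
      · rfl
  · intro k hk hkm
    rw [Finset.mem_range] at hk
    have hk' : k < m := by omega
    split_ifs with h
    · rw [coeff_T_pow_zero hT, mul_zero, mul_zero]
      have h1 : k * p ≤ e.degree := by
        have := degree_le_of_le h
        rwa [degree_smul', hγd] at this
      rw [degree_tsub h, degree_smul', hγd, he]
      have e1 : (m - k) * q < (m - k) * p :=
        mul_lt_mul_of_pos_left hqp (by omega)
      have e2 : (m - k) * p + k * p = m * p := by
        rw [← Nat.add_mul]
        congr 1
        omega
      omega
    · rw [mul_zero]
  · intro h
    exact absurd (Finset.self_mem_range_succ m) h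

lemma coeff_pow_next (hP : P = monomial γ c + T) (hγd : γ.degree = p)
    (hT : T.totalDegree ≤ q) (hqp : q < p) {m : ℕ} (hm : 1 ≤ m) {e : Fin n →₀ ℕ}
    (he : e.degree = (m - 1) * p + q) :
    coeff e (P ^ m) = (m : K) * c ^ (m - 1) *
      (if (m - 1) • γ ≤ e then coeff (e - (m - 1) • γ) T else 0) := by
  rw [coeff_pow_expand hP]
  rw [Finset.sum_eq_single (m - 1)]
  · have hch : m.choose (m - 1) = m := by
      rw [Nat.choose_symm hm, Nat.choose_one_right]
    rw [hch]
    have hmm : m - (m - 1) = 1 := by omega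
    rw [hmm, pow_one]
    split_ifs with h
    · ring
    · ring
  · intro k hk hkm
    rw [Finset.mem_range] at hk
    split_ifs with h
    · have h1 : k * p ≤ e.degree := by
        have := degree_le_of_le h
        rwa [degree_smul', hγd] at this
      rcases Nat.lt_or_ge k m with hkm' | hkm'
      · -- k ≤ m - 2
        have hk2 : k + 2 ≤ m := by omega
        rw [coeff_T_pow_zero hT, mul_zero, mul_zero]
        rw [degree_tsub h, degree_smul', hγd, he]
        -- (m-k)*q < (m-1)*p + q - k*p
        have e1 : (m - k) * q = (m - 1 - k) * q + q := by
          conv_lhs => rw [show m - k = (m - 1 - k) + 1 by omega]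
          ring
        have e2 : (m - 1 - k) * p + k * p = (m - 1) * p := by
          rw [← Nat.add_mul]
          congr 1
          omega
        have e1' : (m - 1 - k) * q < (m - 1 - k) * p :=
          mul_lt_mul_of_pos_left hqp (by omega)
        omega
      · -- k = m : m•γ ≤ e impossible
        exfalso
        have hk'' : k = m := by omega
        rw [hk'', he] at h1
        have e4 : m * p = (m - 1) * p + p := by
          conv_lhs => rw [show m = (m - 1) + 1 by omega]
          ring
        omega
    · rw [mul_zero]
  · intro h
    exfalso
    exact h (Finset.mem_range.mpr (by omega))


lemma pred_mul_add {a b : ℕ} (ha : 1 ≤ a) : (a - 1) * b + b = a * b := by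
  cases a with
  | zero => omega
  | succ a' => simp [Nat.succ_sub_one, Nat.succ_mul]

noncomputable def col {n : ℕ} (i : Fin n) (E : Fin n × Fin n →₀ ℕ) : Fin n →₀ ℕ :=
  Finsupp.equivFunOnFinite.symm (fun k => E (k, i))

@[simp] lemma col_apply {n : ℕ} (i : Fin n) (E : Fin n × Fin n →₀ ℕ) (k : Fin n) :
    col i E k = E (k, i) := rfl

variable {K : Type*} [CommRing K] {n : ℕ}

lemma eval_bind₁' (x : Fin n × Fin n → K) (g : Fin n → MvPolynomial (Fin n × Fin n) K)
    (φ : MvPolynomial (Fin n) K) :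
    eval x (bind₁ g φ) = eval (fun i => eval x (g i)) φ :=
  eval₂Hom_bind₁ (RingHom.id K) x g φ

lemma coeff_bind₁_row (P : MvPolynomial (Fin n) K) (φ : MvPolynomial (Fin n) K)
    (E : Fin n × Fin n →₀ ℕ) :
    coeff E (bind₁ (fun i => rename (Prod.mk i) P) φ) =
      ∑ d ∈ φ.support, coeff d φ * ∏ i, coeff (row i E) (P ^ d i) := by
  rw [bind₁, aeval_def, algebraMap_eq, eval₂_eq']
  rw [coeff_sum]
  apply Finset.sum_congr rfl
  intro d hd
  rw [coeff_C_mul]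
  congr 1
  have : (∏ i, (rename (Prod.mk i) P) ^ d i) = ∏ i, rename (Prod.mk i) (P ^ d i) := by
    apply Finset.prod_congr rfl
    intro i _
    rw [map_pow]
  rw [this, coeff_prod_rename]

lemma coeff_bind₁_col (P : MvPolynomial (Fin n) K) (φ : MvPolynomial (Fin n) K)
    (E : Fin n × Fin n →₀ ℕ) :
    coeff E (bind₁ (fun i => rename (fun k => (k, i)) P) φ) =
      ∑ d ∈ φ.support, coeff d φ * ∏ i, coeff (col i E) (P ^ d i) := by
  have hswap : Function.Injective (Prod.swap : Fin n × Fin n → Fin n × Fin n) :=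
    Prod.swap_injective
  have h1 : bind₁ (fun i => rename (fun k => (k, i)) P) φ =
      rename Prod.swap (bind₁ (fun i => rename (Prod.mk i) P) φ) := by
    rw [rename_bind₁]
    have hfun : ∀ i : Fin n, rename (Prod.swap : Fin n × Fin n → Fin n × Fin n)
        (rename (Prod.mk i) P) = rename (fun k => (k, i)) P := by
      intro i
      rw [rename_rename]
      rfl
    simp only [hfun]
  have h2 : E = Finsupp.mapDomain Prod.swap
      (Finsupp.equivFunOnFinite.symm (fun x : Fin n × Fin n => E (x.2, x.1))) := by
    ext x
    obtain ⟨x1, x2⟩ := x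
    have : (x1, x2) = Prod.swap (x2, x1) := rfl
    rw [this, Finsupp.mapDomain_apply hswap]
    rfl
  rw [h1, h2, coeff_rename_mapDomain _ hswap]
  rw [coeff_bind₁_row]
  apply Finset.sum_congr rfl
  intro d hd
  congr 1
  apply Finset.prod_congr rfl
  intro i _
  congr 1
  ext k
  rw [row_apply, col_apply]
  have h3 : ((k, i) : Fin n × Fin n) = Prod.swap (i, k) := rfl
  rw [h3, Finsupp.mapDomain_apply hswap]

end BisymAux

open MvPolynomial BisymAux in
/-- If some exponent satisfies `0 < γ_j < p − q`, then `P_q = 0`. -/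
theorem bisym_Pq_vanishes
    {K : Type*} [Field K] [CharZero K] {n p q : ℕ}
    (P : MvPolynomial (Fin n) K)
    (hbi : Bisym fun x : Fin n → K => MvPolynomial.eval x P)
    (hdeg : P.totalDegree = p) (hp : 2 ≤ p)
    (c : K) (hc : c ≠ 0) (γ : Fin n →₀ ℕ) (hγ : ∑ i, γ i = p)
    (hPp : MvPolynomial.homogeneousComponent p P = MvPolynomial.monomial γ c)
    (hne : P ≠ MvPolynomial.homogeneousComponent p P)
    (hq : (P - MvPolynomial.homogeneousComponent p P).totalDegree = q) (hqp : q < p)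
    (j : Fin n) (hj1 : 0 < γ j) (hj2 : γ j < p - q) :
    MvPolynomial.homogeneousComponent q P = 0 := by
  classical
  set T : MvPolynomial (Fin n) K := P - MvPolynomial.monomial γ c with hTdef
  have hPMT : P = MvPolynomial.monomial γ c + T := by rw [hTdef]; ring
  have hTq : T.totalDegree = q := by rw [hTdef, ← hPp]; exact hq
  have hγd : γ.degree = p := by rw [degree_eq_sum']; exact hγ
  have hcoeffT : ∀ d : Fin n →₀ ℕ, q < d.degree → coeff d T = 0 := by
    intro d hd
    apply coeff_eq_zero_of_totalDegree_lt
    rw [Finsupp.degree] at hd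
    exact lt_of_le_of_lt (le_of_eq hTq) (by exact hd)
  have hcoeffP : ∀ d : Fin n →₀ ℕ, q < d.degree → d ≠ γ → coeff d P = 0 := by
    intro d hd hdγ
    rw [hPMT, coeff_add, coeff_monomial, if_neg (fun h => hdγ h.symm), hcoeffT d hd, add_zero]
  have hcγ : coeff γ P = c := by
    rw [hPMT, coeff_add, coeff_monomial, if_pos rfl, hcoeffT γ (by omega), add_zero]
  have hγsupp : γ ∈ P.support := by
    rw [MvPolynomial.mem_support_iff, hcγ]
    exact hc
  -- the two compositions agree
  have hLR : bind₁ (fun i => rename (Prod.mk i) P) P =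
      bind₁ (fun i => rename (fun k => (k, i)) P) P := by
    apply MvPolynomial.funext
    intro x
    rw [eval_bind₁', eval_bind₁']
    have h1 : (fun i => eval x (rename (Prod.mk i) P)) =
        fun i => eval (fun k => x (i, k)) P := by
      funext i
      rw [eval_rename]
      rfl
    have h2 : (fun i => eval x (rename (fun k => (k, i)) P)) =
        fun i => eval (fun k => x (k, i)) P := by
      funext i
      rw [eval_rename]
      rfl
    rw [h1, h2]
    exact hbi (fun i k => x (i, k))
  -- prove each coefficient of the homogeneous component vanishes
  rw [MvPolynomial.eq_zero_iff]
  intro δ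
  rw [coeff_homogeneousComponent]
  split_ifs with hδq
  swap
  · rfl
  -- now δ.degree = q ; must show coeff δ P = 0
  have hδγ : δ ≠ γ := fun h => by rw [h, hγd] at hδq; omega
  have hδsum : ∑ k, δ k = q := by rw [← degree_eq_sum', hδq]
  -- the distinguished exponent matrix
  set E : Fin n × Fin n →₀ ℕ := Finsupp.equivFunOnFinite.symm
    (fun x : Fin n × Fin n => if x.1 = j then (γ j - 1) * γ x.2 + δ x.2 else γ x.1 * γ x.2)
    with hEdef
  have hEapp : ∀ i k : Fin n,
      E (i, k) = if i = j then (γ j - 1) * γ k + δ k else γ i * γ k := fun i k => rfl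
  -- row data
  have hrowj : ∀ k, row j E k = (γ j - 1) * γ k + δ k := by
    intro k; rw [row_apply, hEapp, if_pos rfl]
  have hrowi : ∀ i, i ≠ j → row i E = γ i • γ := by
    intro i hi
    ext k
    rw [row_apply, hEapp, if_neg hi]
    simp [mul_comm]
  have hrowjdeg : (row j E).degree = (γ j - 1) * p + q := by
    rw [degree_eq_sum']
    simp only [hrowj]
    rw [Finset.sum_add_distrib, ← Finset.mul_sum, hγ, hδsum]
  have hrowideg : ∀ i, i ≠ j → (row i E).degree = γ i * p := by
    intro i hi
    rw [hrowi i hi, degree_smul', hγd]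
  -- column data
  have hcolapp : ∀ m k : Fin n,
      col m E k = if k = j then (γ j - 1) * γ m + δ m else γ k * γ m := fun m k => rfl
  have hsumerase : ∀ m : Fin n, ∑ k ∈ Finset.univ.erase j, γ k * γ m = (p - γ j) * γ m := by
    intro m
    rw [← Finset.sum_mul]
    congr 1
    have := Finset.add_sum_erase Finset.univ γ (Finset.mem_univ j)
    omega
  have hcoldeg : ∀ m, (col m E).degree = (p - 1) * γ m + δ m := by
    intro m
    rw [degree_eq_sum']
    rw [← Finset.add_sum_erase _ _ (Finset.mem_univ j)]
    have h1 : col m E j = (γ j - 1) * γ m + δ m := by rw [hcolapp, if_pos rfl]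
    have h2 : ∑ k ∈ Finset.univ.erase j, col m E k = (p - γ j) * γ m := by
      rw [← hsumerase m]
      apply Finset.sum_congr rfl
      intro k hk
      rw [hcolapp, if_neg (Finset.ne_of_mem_erase hk)]
    rw [h1, h2]
    have e1 : (γ j - 1) * γ m + γ m = γ j * γ m := pred_mul_add hj1
    have e2 : (p - γ j) * γ m + γ j * γ m = p * γ m := by
      rw [← Nat.add_mul]
      congr 1
      have : γ j ≤ p := by
        rw [← hγ]
        exact Finset.single_le_sum (fun k _ => Nat.zero_le (γ k)) (Finset.mem_univ j)
      omega
    have e3 : (p - 1) * γ m + γ m = p * γ m := pred_mul_add (by omega)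
    omega
  have hγjlep : γ j ≤ p := by
    rw [← hγ]
    exact Finset.single_le_sum (fun k _ => Nat.zero_le (γ k)) (Finset.mem_univ j)
  -- the "other terms vanish" argument, common to both sides
  have hotherrow : ∀ d ∈ P.support, d ≠ γ →
      coeff d P * ∏ i, coeff (row i E) (P ^ d i) = 0 := by
    intro d hd hdγ
    have hdq : d.degree ≤ q := by
      by_contra hdq
      push_neg at hdq
      exact (MvPolynomial.mem_support_iff.mp hd) (hcoeffP d hdq hdγ)
    -- find a row with too-high degree
    have : ∃ i, d i * p < (row i E).degree := by
      by_contra hcon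
      push_neg at hcon
      have hsum : ∑ i, (row i E).degree ≤ ∑ i, d i * p :=
        Finset.sum_le_sum fun i _ => hcon i
      have hsumrow : ∑ i, (row i E).degree = (p - γ j) * p + ((γ j - 1) * p + q) := by
        rw [← Finset.add_sum_erase _ _ (Finset.mem_univ j), hrowjdeg]
        have : ∑ i ∈ Finset.univ.erase j, (row i E).degree =
            ∑ i ∈ Finset.univ.erase j, γ i * p := by
          apply Finset.sum_congr rfl
          intro i hi
          exact hrowideg i (Finset.ne_of_mem_erase hi)
        rw [this, ← Finset.sum_mul]
        have hsg : ∑ i ∈ Finset.univ.erase j, γ i = p - γ j := by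
          have := Finset.add_sum_erase Finset.univ γ (Finset.mem_univ j)
          omega
        rw [hsg]
        ring
      have hsumd : ∑ i, d i * p = (∑ i, d i) * p := by rw [Finset.sum_mul]
      have hdsum : ∑ i, d i ≤ q := by rw [← degree_eq_sum']; exact hdq
      have f1 : (∑ i, d i) * p ≤ q * p := Nat.mul_le_mul_right p hdsum
      have f6 : 2 * p ≤ p * p := Nat.mul_le_mul_right p hp
      have f7 : q * p + p ≤ p * p := by
        have h := Nat.mul_le_mul_right p (show q + 1 ≤ p by omega)
        rwa [Nat.succ_mul] at h
      have e2 : (p - γ j) * p + γ j * p = p * p := by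
        rw [← Nat.add_mul]; congr 1; omega
      have e3 : (γ j - 1) * p + p = γ j * p := pred_mul_add hj1
      rcases Nat.eq_zero_or_pos q with rfl | hq0
      · omega
      · omega
    obtain ⟨i, hi⟩ := this
    have : coeff (row i E) (P ^ d i) = 0 :=
      coeff_pow_zero_high hPMT hγd (le_of_eq hTq) hqp hi
    rw [Finset.prod_eq_zero (Finset.mem_univ i) this, mul_zero]
  have hothercol : ∀ d ∈ P.support, d ≠ γ →
      coeff d P * ∏ i, coeff (col i E) (P ^ d i) = 0 := by
    intro d hd hdγ
    have hdq : d.degree ≤ q := by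
      by_contra hdq
      push_neg at hdq
      exact (MvPolynomial.mem_support_iff.mp hd) (hcoeffP d hdq hdγ)
    have : ∃ i, d i * p < (col i E).degree := by
      by_contra hcon
      push_neg at hcon
      have hsum : ∑ i, (col i E).degree ≤ ∑ i, d i * p :=
        Finset.sum_le_sum fun i _ => hcon i
      have hsumcol : ∑ i, (col i E).degree = (p - 1) * p + q := by
        have : ∀ i, (col i E).degree = (p - 1) * γ i + δ i := hcoldeg
        simp only [this]
        rw [Finset.sum_add_distrib, ← Finset.mul_sum, hγ, hδsum]
      have hsumd : ∑ i, d i * p = (∑ i, d i) * p := by rw [Finset.sum_mul]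
      have hdsum : ∑ i, d i ≤ q := by rw [← degree_eq_sum']; exact hdq
      have f1 : (∑ i, d i) * p ≤ q * p := Nat.mul_le_mul_right p hdsum
      have f6 : 2 * p ≤ p * p := Nat.mul_le_mul_right p hp
      have f7 : q * p + p ≤ p * p := by
        have h := Nat.mul_le_mul_right p (show q + 1 ≤ p by omega)
        rwa [Nat.succ_mul] at h
      have e3 : (p - 1) * p + p = p * p := pred_mul_add (by omega)
      rcases Nat.eq_zero_or_pos q with rfl | hq0
      · omega
      · omega
    obtain ⟨i, hi⟩ := this
    have : coeff (col i E) (P ^ d i) = 0 :=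
      coeff_pow_zero_high hPMT hγd (le_of_eq hTq) hqp hi
    rw [Finset.prod_eq_zero (Finset.mem_univ i) this, mul_zero]
  -- the coefficient of E on the left-hand side
  have hL : coeff E (bind₁ (fun i => rename (Prod.mk i) P) P) =
      c ^ p * ((γ j : K) * coeff δ P) := by
    rw [coeff_bind₁_row, Finset.sum_eq_single_of_mem γ hγsupp hotherrow]
    rw [hcγ]
    rw [← Finset.mul_prod_erase _ _ (Finset.mem_univ j)]
    -- the j factor
    have hcondj : (γ j - 1) • γ ≤ row j E := by
      rw [Finsupp.le_def]
      intro k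
      rw [hrowj k]
      simp only [Finsupp.smul_apply, smul_eq_mul]
      omega
    have hsubj : row j E - (γ j - 1) • γ = δ := by
      ext k
      rw [Finsupp.tsub_apply, hrowj k]
      simp only [Finsupp.smul_apply, smul_eq_mul]
      omega
    have hcoeffδT : coeff δ T = coeff δ P := by
      rw [hTdef, coeff_sub, coeff_monomial, if_neg (fun h => hδγ h.symm), sub_zero]
    have hfj : coeff (row j E) (P ^ γ j) = (γ j : K) * c ^ (γ j - 1) * coeff δ P := by
      rw [coeff_pow_next hPMT hγd (le_of_eq hTq) hqp hj1 hrowjdeg,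
        if_pos hcondj, hsubj, hcoeffδT]
    -- the other factors
    have hfi : ∏ i ∈ Finset.univ.erase j, coeff (row i E) (P ^ γ i) =
        c ^ (p - γ j) := by
      have h1 : ∀ i ∈ Finset.univ.erase j, coeff (row i E) (P ^ γ i) = c ^ γ i := by
        intro i hi
        have hne' := Finset.ne_of_mem_erase hi
        rw [coeff_pow_top hPMT hγd (le_of_eq hTq) hqp (hrowideg i hne'),
          if_pos (hrowi i hne')]
      rw [Finset.prod_congr rfl h1, Finset.prod_pow_eq_pow_sum]
      congr 1
      have := Finset.add_sum_erase Finset.univ γ (Finset.mem_univ j)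
      omega
    rw [hfj, hfi]
    have hexp : c * c ^ (γ j - 1) * c ^ (p - γ j) = c ^ p := by
      rw [← pow_succ', ← pow_add]
      congr 1
      omega
    calc c * ((γ j : K) * c ^ (γ j - 1) * coeff δ P * c ^ (p - γ j))
        = (c * c ^ (γ j - 1) * c ^ (p - γ j)) * ((γ j : K) * coeff δ P) := by ring
      _ = c ^ p * ((γ j : K) * coeff δ P) := by rw [hexp]
  -- the coefficient of E on the right-hand side
  have hR : coeff E (bind₁ (fun i => rename (fun k => (k, i)) P) P) = 0 := by
    rw [coeff_bind₁_col, Finset.sum_eq_single_of_mem γ hγsupp hothercol]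
    -- show the γ-term vanishes: some column factor is zero
    by_cases hA : ∃ m, γ m < δ m
    · obtain ⟨m, hm⟩ := hA
      have hhigh : γ m * p < (col m E).degree := by
        rw [hcoldeg m]
        have e1 : (p - 1) * γ m + γ m = p * γ m := pred_mul_add (by omega)
        have e2 : γ m * p = p * γ m := Nat.mul_comm _ _
        omega
      have : coeff (col m E) (P ^ γ m) = 0 :=
        coeff_pow_zero_high hPMT hγd (le_of_eq hTq) hqp hhigh
      rw [Finset.prod_eq_zero (Finset.mem_univ m) this, mul_zero]
    · push_neg at hA
      -- δ ≤ γ pointwise; find m with δ m < γ m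
      have hex : ∃ m, δ m < γ m := by
        by_contra hcon
        push_neg at hcon
        have : ∀ m, δ m = γ m := fun m => le_antisymm (hA m) (hcon m)
        have : q = p := by
          rw [← hδsum, ← hγ]
          exact Finset.sum_congr rfl fun m _ => this m
        omega
      obtain ⟨m, hm⟩ := hex
      have hdiffle : γ m - δ m ≤ p - q := by
        have h1 : ∑ k, (γ k - δ k) = p - q := by
          rw [Finset.sum_tsub_distrib _ (fun k _ => hA k), hγ, hδsum]
        have h2 : γ m - δ m ≤ ∑ k, (γ k - δ k) :=
          Finset.single_le_sum (f := fun k => γ k - δ k)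
            (fun k _ => Nat.zero_le _) (Finset.mem_univ m)
        omega
      have hγm1 : 1 ≤ γ m := by omega
      have hfzero : coeff (col m E) (P ^ γ m) = 0 := by
        rcases Nat.lt_or_ge (γ m - δ m) (p - q) with hcase | hcase
        · -- gap case
          apply coeff_pow_zero_gap hPMT hγd (le_of_eq hTq) hqp
          · rw [hcoldeg m]
            have e1 : (γ m - 1) * p + p = γ m * p := pred_mul_add hγm1
            have e2 : (p - 1) * γ m + γ m = p * γ m := pred_mul_add (by omega)
            have e3 : γ m * p = p * γ m := Nat.mul_comm _ _
            omega
          · rw [hcoldeg m]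
            have e2 : (p - 1) * γ m + γ m = p * γ m := pred_mul_add (by omega)
            have e3 : γ m * p = p * γ m := Nat.mul_comm _ _
            omega
        · -- boundary case : γ m - δ m = p - q exactly
          have hcase' : γ m - δ m = p - q := le_antisymm hdiffle hcase
          have hdeg : (col m E).degree = (γ m - 1) * p + q := by
            rw [hcoldeg m]
            have e1 : (γ m - 1) * p + p = γ m * p := pred_mul_add hγm1
            have e2 : (p - 1) * γ m + γ m = p * γ m := pred_mul_add (by omega)
            have e3 : γ m * p = p * γ m := Nat.mul_comm _ _
            omega
          rw [coeff_pow_next hPMT hγd (le_of_eq hTq) hqp hγm1 hdeg]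
          rw [if_neg, mul_zero]
          -- the divisibility condition fails at index j
          intro hle
          have hlej := Finsupp.le_def.mp hle j
          simp only [Finsupp.smul_apply, smul_eq_mul] at hlej
          rw [hcolapp m j, if_pos rfl] at hlej
          -- (γ m - 1) * γ j ≤ (γ j - 1) * γ m + δ m : contradiction
          have e1 : (γ m - 1) * γ j + γ j = γ m * γ j := pred_mul_add hγm1
          have e2 : (γ j - 1) * γ m + γ m = γ j * γ m := pred_mul_add hj1
          have e3 : γ m * γ j = γ j * γ m := Nat.mul_comm _ _
          omega
      rw [Finset.prod_eq_zero (Finset.mem_univ m) hfzero, mul_zero]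
  -- conclude
  have hkey : c ^ p * ((γ j : K) * coeff δ P) = 0 := by
    rw [← hL, ← hR, hLR]
  have hγjK : (γ j : K) ≠ 0 := Nat.cast_ne_zero.mpr (by omega)
  have hcp : c ^ p ≠ 0 := pow_ne_zero p hc
  have := mul_eq_zero.mp hkey
  rcases this with h | h
  · exact absurd h hcp
  · rcases mul_eq_zero.mp h with h' | h'
    · exact absurd h' hγjK
    · exact h'
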